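/- Every standard Young tableau of rectangular shape 2 × n is realizable: for every SYT T of shape 2 × n there exist real numbers u₁ < u₂ and v₁ < v₂ < ⋯ < v_n such that all sums u_i + v_j are distinct and the rank of u_i + v_j among all these 2n sums (ranked from smallest = 1 to largest = 2n) equals the entry of T in position (i,j). -/

import Mathlib

/-! Auxiliary development for two_row_SYT_realizable. -/

noncomputable def SYTaux.dv (j : ℕ) : ℝ := (4:ℝ)⁻¹ ^ j / 2
noncomputable def SYTaux.sv (j : ℕ) : ℝ := (4:ℝ)⁻¹ ^ j / 6

namespace SYTaux

lemma dv_pos (j : ℕ) : 0 < dv j := by unfold dv; positivity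
lemma sv_pos (j : ℕ) : 0 < sv j := by unfold sv; positivity
lemma sv_lt_one (j : ℕ) : sv j < 1 := by
  unfold sv
  have h : (4:ℝ)⁻¹ ^ j ≤ 1 := pow_le_one₀ (by norm_num) (by norm_num)
  linarith
lemma sv_lt_dv (j : ℕ) : sv j < dv j := by
  unfold sv dv
  have h : (0:ℝ) < (4:ℝ)⁻¹ ^ j := by positivity
  linarith
lemma dv_sv_succ (j : ℕ) : dv (j+1) + sv (j+1) = sv j := by
  unfold sv dv; rw [pow_succ]; ring
lemma dv_anti {i j : ℕ} (h : i ≤ j) : dv j ≤ dv i := by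
  unfold dv
  have := pow_le_pow_of_le_one (by norm_num : (0:ℝ) ≤ 4⁻¹) (by norm_num) h
  linarith

noncomputable def xseq (r : ℕ → ℕ) : ℕ → ℝ
  | 0 => 0
  | (j+1) => max (xseq r j)
      (if r (j+1) = 0 then xseq r j else xseq r (min (r (j+1) - 1) j) + 1)
      + dv (j+1)
  decreasing_by all_goals omega

lemma xseq_succ_ge (r : ℕ → ℕ) (j : ℕ) : xseq r j + dv (j+1) ≤ xseq r (j+1) := by
  rw [xseq]
  have := le_max_left (xseq r j)
      (if r (j+1) = 0 then xseq r j else xseq r (min (r (j+1) - 1) j) + 1)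
  linarith

lemma xseq_strictMono (r : ℕ → ℕ) : StrictMono (xseq r) := by
  apply strictMono_nat_of_lt_succ
  intro j
  have h1 := xseq_succ_ge r j
  have h2 := dv_pos (j+1)
  linarith

lemma xseq_lb (r : ℕ → ℕ) (j : ℕ) (h : r (j+1) ≠ 0) :
    xseq r (min (r (j+1) - 1) j) + 1 + dv (j+1) ≤ xseq r (j+1) := by
  rw [xseq, if_neg h]
  have := le_max_right (xseq r j)
      (xseq r (min (r (j+1) - 1) j) + 1)
  linarith

variable {n : ℕ} {a b : ℕ → ℕ}

/-- count of `k < n` with `b k < a j`. -/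
def rfun (n : ℕ) (a b : ℕ → ℕ) (j : ℕ) : ℕ :=
  ((Finset.range n).filter fun k => b k < a j).card

section

variable (ha : ∀ i j : ℕ, i < j → j < n → a i < a j)
  (hb : ∀ i j : ℕ, i < j → j < n → b i < b j)
  (hab : ∀ j : ℕ, j < n → a j < b j)
  (hne : ∀ i j : ℕ, i < n → j < n → a i ≠ b j)

include hb in
lemma lowerset_fwd {i j : ℕ} (hi : i < n) (_hj : j < n) (hij : b i < a j) :
    i < rfun n a b j := by
  have hsub : Finset.range (i+1) ⊆ (Finset.range n).filter fun k => b k < a j := by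
    intro k hk
    rw [Finset.mem_range] at hk
    rw [Finset.mem_filter, Finset.mem_range]
    refine ⟨by omega, ?_⟩
    rcases Nat.lt_or_ge k i with h | h
    · exact lt_trans (hb k i h hi) hij
    · have : k = i := by omega
      rw [this]; exact hij
  have := Finset.card_le_card hsub
  rw [Finset.card_range] at this
  unfold rfun
  omega

include hb in
lemma lowerset_bwd {i j : ℕ} (hi : i < n) (_hj : j < n) (hij : a j < b i) :
    rfun n a b j ≤ i := by
  have hsub : ((Finset.range n).filter fun k => b k < a j) ⊆ Finset.range i := by
    intro k hk
    rw [Finset.mem_filter, Finset.mem_range] at hk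
    rw [Finset.mem_range]
    by_contra hc
    push_neg at hc
    have : b i ≤ b k := by
      rcases Nat.lt_or_ge i k with h | h
      · exact le_of_lt (hb i k h hk.1)
      · have : i = k := by omega
        rw [this]
    omega
  have := Finset.card_le_card hsub
  rw [Finset.card_range] at this
  exact this

include ha hab in
lemma rfun_le {j : ℕ} (hj : j < n) : rfun n a b j ≤ j := by
  have hsub : ((Finset.range n).filter fun k => b k < a j) ⊆ Finset.range j := by
    intro k hk
    rw [Finset.mem_filter, Finset.mem_range] at hk
    rw [Finset.mem_range]
    by_contra hc
    push_neg at hc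
    have h1 : a j ≤ a k := by
      rcases Nat.lt_or_ge j k with h | h
      · exact le_of_lt (ha j k h hk.1)
      · have : j = k := by omega
        rw [this]
    have := hab k hk.1
    omega
  have := Finset.card_le_card hsub
  rw [Finset.card_range] at this
  exact this

include ha in
lemma rfun_mono {i j : ℕ} (hij : i ≤ j) (hj : j < n) : rfun n a b i ≤ rfun n a b j := by
  apply Finset.card_le_card
  intro k hk
  rw [Finset.mem_filter] at hk ⊢
  refine ⟨hk.1, lt_of_lt_of_le hk.2 ?_⟩
  rcases Nat.lt_or_ge i j with h | h
  · exact le_of_lt (ha i j h hj)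
  · have : i = j := by omega
    rw [this]

include ha hb hab hne in
/-- main invariant: if `rfun j < j` then `x j + sv j < x (rfun j) + 1`. -/
lemma inv_main : ∀ j, j < n → rfun n a b j < j →
    xseq (rfun n a b) j + sv j < xseq (rfun n a b) (rfun n a b j) + 1 := by
  intro j
  induction j using Nat.strong_induction_on with
  | _ j IH =>
    intro hjn hrj
    match j, hjn, hrj, IH with
    | (m+1), hjn, hrj, IH =>
      set R := rfun n a b with hRdef
      have hRm : R (m+1) ≤ m := by omega
      have hmin : min (R (m+1) - 1) m = R (m+1) - 1 := by omega
      rw [xseq, hmin]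
      rcases max_cases (xseq R m)
          (if R (m+1) = 0 then xseq R m else xseq R (R (m+1) - 1) + 1) with
        ⟨hmax, _⟩ | ⟨hmax, hlt⟩
      · -- max is x m
        rw [hmax]
        have key : dv (m+1) + sv (m+1) = sv m := dv_sv_succ m
        rcases Nat.lt_or_ge (R (m+1)) m with hcase | hcase
        · -- R (m+1) < m : use IH at m
          have hmn : m < n := by omega
          have hrm : R m ≤ R (m+1) := rfun_mono ha (Nat.le_succ m) hjn
          have hIH := IH m (Nat.lt_succ_self m) hmn (by omega)
          have hx : xseq R (R m) ≤ xseq R (R (m+1)) :=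
            (xseq_strictMono R).monotone hrm
          linarith
        · -- R (m+1) = m
          have hRe : R (m+1) = m := by omega
          rw [hRe]
          have := sv_lt_one m
          linarith
      · -- max is the if-term, and x m < it
        have hR0 : R (m+1) ≠ 0 := by
          intro h
          rw [h, if_pos rfl] at hlt
          exact lt_irrefl _ hlt
        rw [if_neg hR0] at hmax hlt ⊢
        rw [hmax]
        set t := R (m+1) with ht
        have ht1 : 1 ≤ t := by omega
        have hgap : xseq R (t-1) + dv t ≤ xseq R t := by
          have := xseq_succ_ge R (t-1)
          have he : t - 1 + 1 = t := by omega
          rwa [he] at this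
        have key : dv (m+1) + sv (m+1) = sv m := dv_sv_succ m
        have h1 : dv m ≤ dv t := dv_anti hRm
        have h2 : sv m < dv m := sv_lt_dv m
        linarith

include ha hb hab hne in
/-- crossing upper bound: `i < j`, `a j < b i` gives `x j + sv j < x i + 1`. -/
lemma crossC {i j : ℕ} (hij : i < j) (hjn : j < n) (hcross : a j < b i) :
    xseq (rfun n a b) j + sv j < xseq (rfun n a b) i + 1 := by
  have hin : i < n := by omega
  have hri : rfun n a b j ≤ i := lowerset_bwd hb hin hjn hcross
  have hrj : rfun n a b j < j := by omega
  have := inv_main ha hb hab hne j hjn hrj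
  have hx : xseq (rfun n a b) (rfun n a b j) ≤ xseq (rfun n a b) i :=
    (xseq_strictMono _).monotone hri
  linarith

include ha hb hab hne in
/-- disjoint lower bound: `b i < a j` gives `x i + 1 < x j`. -/
lemma disjB {i j : ℕ} (hin : i < n) (hjn : j < n) (hdisj : b i < a j) :
    xseq (rfun n a b) i + 1 < xseq (rfun n a b) j := by
  have hij : i < j := by
    by_contra hc
    push_neg at hc
    have : a j ≤ a i := by
      rcases Nat.lt_or_ge j i with h | h
      · exact le_of_lt (ha j i h hin)
      · have : j = i := by omega
        rw [this]
    have := hab i hin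
    omega
  have hri : i < rfun n a b j := lowerset_fwd hb hin hjn hdisj
  obtain ⟨m, hm⟩ : ∃ m, j = m + 1 := ⟨j - 1, by omega⟩
  subst hm
  have hRle : rfun n a b (m+1) ≤ m + 1 := rfun_le ha hab hjn
  have hR0 : rfun n a b (m+1) ≠ 0 := by omega
  have hmin : min (rfun n a b (m+1) - 1) m = rfun n a b (m+1) - 1 := by omega
  have hlb := xseq_lb (rfun n a b) m hR0
  rw [hmin] at hlb
  have hx : xseq (rfun n a b) i ≤ xseq (rfun n a b) (rfun n a b (m+1) - 1) :=
    (xseq_strictMono _).monotone (by omega)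
  have := dv_pos (m+1)
  linarith

include ha hb hab hne in
lemma E1 {i j : ℕ} (hin : i < n) (hjn : j < n) :
    xseq (rfun n a b) i + 1 ≤ xseq (rfun n a b) j ↔ b i < a j := by
  constructor
  · intro h
    by_contra hc
    push_neg at hc
    have hne' : a j ≠ b i := hne j i hjn hin
    have hcross : a j < b i := by omega
    rcases Nat.lt_or_ge i j with hij | hij
    · have := crossC ha hb hab hne hij hjn hcross
      have := sv_pos j
      linarith
    · have hx : xseq (rfun n a b) j ≤ xseq (rfun n a b) i :=
        (xseq_strictMono _).monotone hij
      linarith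
  · intro h
    have := disjB ha hb hab hne hin hjn h
    linarith

include ha hb hab hne in
lemma E2 {i j : ℕ} (hin : i < n) (hjn : j < n) :
    xseq (rfun n a b) i ≤ xseq (rfun n a b) j + 1 ↔ a i < b j := by
  constructor
  · intro h
    by_contra hc
    push_neg at hc
    have hne' : a i ≠ b j := hne i j hin hjn
    have hdisj : b j < a i := by omega
    have := disjB ha hb hab hne hjn hin hdisj
    linarith
  · intro h
    rcases le_or_gt i j with hij | hij
    · have hx : xseq (rfun n a b) i ≤ xseq (rfun n a b) j :=
        (xseq_strictMono _).monotone hij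
      linarith
    · have := crossC ha hb hab hne hij hin h
      have := sv_pos i
      linarith

end

end SYTaux


/-- every standard Young tableau of shape `2 × n` is realizable:
there are `u₁ < u₂` and `v₁ < ⋯ < v_n` with all sums `u_i + v_j` distinct such
that the rank of `u_i + v_j` among all `2n` sums equals `T i j`. -/
theorem two_row_SYT_realizable
    (n : ℕ) (T : Fin 2 → Fin n → ℕ)
    (hmem : ∀ i j, T i j ∈ Finset.Icc 1 (2 * n))
    (hinj : Function.Injective (fun p : Fin 2 × Fin n => T p.1 p.2))
    (hrow : ∀ i, StrictMono (T i))
    (hcol : ∀ j, T 0 j < T 1 j) :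
    ∃ (u : Fin 2 → ℝ) (v : Fin n → ℝ),
      StrictMono u ∧ StrictMono v ∧
      Function.Injective (fun p : Fin 2 × Fin n => u p.1 + v p.2) ∧
      ∀ i j, T i j =
        (Finset.univ.filter
          (fun p : Fin 2 × Fin n => u p.1 + v p.2 ≤ u i + v j)).card := by
  have hu : StrictMono (![(0:ℝ),1]) := by
    intro i j hij
    fin_cases i <;> fin_cases j <;> simp_all
  rcases Nat.eq_zero_or_pos n with hn | hn
  · subst hn
    exact ⟨![0,1], Fin.elim0, hu, fun k => k.elim0, fun p => p.2.elim0,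
      fun i j => j.elim0⟩
  -- the two-row construction
  set a : ℕ → ℕ := fun m => if h : m < n then T 0 ⟨m, h⟩ else 0 with hadef
  set b : ℕ → ℕ := fun m => if h : m < n then T 1 ⟨m, h⟩ else 0 with hbdef
  have haval : ∀ k : Fin n, a k.val = T 0 k := by
    intro k; simp only [hadef, dif_pos k.isLt, Fin.eta]
  have hbval : ∀ k : Fin n, b k.val = T 1 k := by
    intro k; simp only [hbdef, dif_pos k.isLt, Fin.eta]
  have ha : ∀ i j : ℕ, i < j → j < n → a i < a j := by
    intro i j hij hj
    have hi : i < n := lt_trans hij hj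
    simp only [hadef, dif_pos hi, dif_pos hj]
    exact hrow 0 (show (⟨i, hi⟩ : Fin n) < ⟨j, hj⟩ from hij)
  have hb : ∀ i j : ℕ, i < j → j < n → b i < b j := by
    intro i j hij hj
    have hi : i < n := lt_trans hij hj
    simp only [hbdef, dif_pos hi, dif_pos hj]
    exact hrow 1 (show (⟨i, hi⟩ : Fin n) < ⟨j, hj⟩ from hij)
  have hab : ∀ j : ℕ, j < n → a j < b j := by
    intro j hj
    simp only [hadef, hbdef, dif_pos hj]
    exact hcol ⟨j, hj⟩
  have hne : ∀ i j : ℕ, i < n → j < n → a i ≠ b j := by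
    intro i j hi hj h
    have h2 := hinj (a₁ := (0, ⟨i, hi⟩)) (a₂ := (1, ⟨j, hj⟩)) (by
      simp only [hadef, hbdef, dif_pos hi, dif_pos hj] at h
      exact h)
    have h3 : (0 : Fin 2) = 1 := congrArg Prod.fst h2
    exact absurd h3 (by decide)
  set x : ℕ → ℝ := SYTaux.xseq (SYTaux.rfun n a b) with hxdef
  have hxmono : StrictMono x := SYTaux.xseq_strictMono _
  -- the key inequalities, phrased in terms of T
  have hE1 : ∀ k j : Fin n, x k.val + 1 ≤ x j.val ↔ T 1 k < T 0 j := by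
    intro k j
    rw [hxdef, SYTaux.E1 ha hb hab hne k.isLt j.isLt, haval, hbval]
  have hE2 : ∀ k j : Fin n, x k.val ≤ x j.val + 1 ↔ T 0 k < T 1 j := by
    intro k j
    rw [hxdef, SYTaux.E2 ha hb hab hne k.isLt j.isLt, haval, hbval]
  have hE3 : ∀ k j : Fin n, x k.val ≤ x j.val ↔ k ≤ j := by
    intro k j
    exact hxmono.le_iff_le
  -- counting lemmas
  have hsplit : ∀ (P : Fin 2 × Fin n → Prop) (_ : DecidablePred P),
      (Finset.univ.filter P).card
        = (Finset.univ.filter fun k => P (0, k)).card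
          + (Finset.univ.filter fun k => P (1, k)).card := by
    intro P _
    rw [Finset.card_filter, Finset.card_filter, Finset.card_filter,
      Fintype.sum_prod_type, Fin.sum_univ_two]
  have hcard : ∀ c : ℕ, 1 ≤ c → c ≤ 2 * n →
      ((Finset.univ.filter fun p : Fin 2 × Fin n => T p.1 p.2 < c).card) + 1 = c := by
    intro c h1 h2
    have himg : Finset.univ.image (fun p : Fin 2 × Fin n => T p.1 p.2)
        = Finset.Icc 1 (2 * n) := by
      apply Finset.eq_of_subset_of_card_le
      · intro m hm
        rw [Finset.mem_image] at hm
        obtain ⟨p, _, rfl⟩ := hm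
        exact hmem p.1 p.2
      · rw [Finset.card_image_of_injective _ hinj, Nat.card_Icc, Finset.card_univ]
        simp
    have h3 : (Finset.Icc 1 (2*n)).filter (fun m => m < c)
        = (Finset.univ.filter fun p : Fin 2 × Fin n => T p.1 p.2 < c).image
            (fun p => T p.1 p.2) := by
      rw [← himg, Finset.filter_image]
    have key : ((Finset.univ.filter fun p : Fin 2 × Fin n => T p.1 p.2 < c).card)
        = (Finset.Ico 1 c).card := by
      calc (Finset.univ.filter fun p : Fin 2 × Fin n => T p.1 p.2 < c).card
          = ((Finset.univ.filter fun p : Fin 2 × Fin n => T p.1 p.2 < c).image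
              (fun p => T p.1 p.2)).card :=
            (Finset.card_image_of_injective _ hinj).symm
        _ = ((Finset.Icc 1 (2*n)).filter (fun m => m < c)).card := by rw [← h3]
        _ = (Finset.Ico 1 c).card := by
            congr 1
            ext m
            simp only [Finset.mem_filter, Finset.mem_Icc, Finset.mem_Ico]
            omega
    rw [key, Nat.card_Ico]
    omega
  have hrow0count : ∀ j : Fin n,
      (Finset.univ.filter fun k : Fin n => T 0 k < T 0 j).card = j.val := by
    intro j
    have : (Finset.univ.filter fun k : Fin n => T 0 k < T 0 j) = Finset.Iio j := by
      ext k
      simp [(hrow 0).lt_iff_lt]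
    rw [this, Fin.card_Iio]
  have hrow1count : ∀ j : Fin n,
      (Finset.univ.filter fun k : Fin n => T 1 k < T 1 j).card = j.val := by
    intro j
    have : (Finset.univ.filter fun k : Fin n => T 1 k < T 1 j) = Finset.Iio j := by
      ext k
      simp [(hrow 1).lt_iff_lt]
    rw [this, Fin.card_Iio]
  refine ⟨![0,1], fun k => x k.val, hu, ?_, ?_, ?_⟩
  · intro k l hkl
    exact hxmono hkl
  · -- injectivity of sums
    intro p q hpq
    simp only at hpq
    obtain ⟨p1, p2⟩ := p
    obtain ⟨q1, q2⟩ := q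
    fin_cases p1 <;> fin_cases q1 <;>
      simp only [Fin.mk_zero, Fin.mk_one, Matrix.cons_val_zero, Matrix.cons_val_one, Matrix.head_cons,
        zero_add] at hpq ⊢
    · exact Prod.ext rfl (Fin.val_injective (hxmono.injective hpq))
    · exfalso
      have h1 : x q2.val + 1 ≤ x p2.val := by linarith
      have h2 : x p2.val ≤ x q2.val + 1 := by linarith
      have := (hE1 q2 p2).mp h1
      have := (hE2 p2 q2).mp h2
      omega
    · exfalso
      have h1 : x p2.val + 1 ≤ x q2.val := by linarith
      have h2 : x q2.val ≤ x p2.val + 1 := by linarith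
      have := (hE1 p2 q2).mp h1
      have := (hE2 q2 p2).mp h2
      omega
    · exact Prod.ext rfl (Fin.val_injective (hxmono.injective (by linarith)))
  · -- the rank computation
    intro i j
    have hbound := hmem i j
    rw [Finset.mem_Icc] at hbound
    show T i j = (Finset.univ.filter
      (fun p : Fin 2 × Fin n => ![(0:ℝ),1] p.1 + x p.2.val ≤ ![(0:ℝ),1] i + x j.val)).card
    rw [hsplit (fun p : Fin 2 × Fin n => ![(0:ℝ),1] p.1 + x p.2.val ≤ ![(0:ℝ),1] i + x j.val)
      inferInstance]
    fin_cases i <;>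
      simp only [Fin.mk_zero, Fin.mk_one, Matrix.cons_val_zero, Matrix.cons_val_one, Matrix.head_cons,
        zero_add] at hbound ⊢
    · -- i = 0
      have e0 : (Finset.univ.filter fun k : Fin n => x k.val ≤ x j.val)
          = Finset.Iic j := by
        ext k
        simp [hE3]
      have e1 : (Finset.univ.filter fun k : Fin n => 1 + x k.val ≤ x j.val)
          = (Finset.univ.filter fun k : Fin n => T 1 k < T 0 j) := by
        ext k
        simp only [Finset.mem_filter, Finset.mem_univ, true_and]
        rw [← hE1 k j]
        constructor <;> intro h <;> linarith
      rw [e0, e1, Fin.card_Iic]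
      have hc := hcard (T 0 j) hbound.1 hbound.2
      have hs := hsplit (fun p : Fin 2 × Fin n => T p.1 p.2 < T 0 j) (by infer_instance)
      simp only at hs
      rw [hrow0count j] at hs
      omega
    · -- i = 1
      have e0 : (Finset.univ.filter fun k : Fin n => x k.val ≤ 1 + x j.val)
          = (Finset.univ.filter fun k : Fin n => T 0 k < T 1 j) := by
        ext k
        simp only [Finset.mem_filter, Finset.mem_univ, true_and]
        rw [← hE2 k j]
        constructor <;> intro h <;> linarith
      have e1 : (Finset.univ.filter fun k : Fin n => 1 + x k.val ≤ 1 + x j.val)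
          = Finset.Iic j := by
        ext k
        simp only [Finset.mem_filter, Finset.mem_univ, true_and, Finset.mem_Iic,
          add_le_add_iff_left]
        exact hE3 k j
      rw [e0]
      show T 1 j = (Finset.univ.filter fun k : Fin n => T 0 k < T 1 j).card
        + (Finset.univ.filter fun k : Fin n => 1 + x k.val ≤ 1 + x j.val).card
      rw [e1, Fin.card_Iic]
      have hc := hcard (T 1 j) hbound.1 hbound.2
      have hs := hsplit (fun p : Fin 2 × Fin n => T p.1 p.2 < T 1 j) (by infer_instance)
      simp only at hs
      rw [hrow1count j] at hs
      omega
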